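/- Let (Y_j) be i.i.d. positive integer-valued random variables, S_m = Y_1 + ... + Y_m, and for i ∈ ℕ let E_i be the event that i = S_m for some m. Then for any integers 0 = i_0 < i_1 < ... < i_n, the probability of the intersection of the events E_{i_1}, ..., E_{i_n} equals the product over k from 1 to n of P(E_{i_k - i_{k-1}}). -/

import Mathlib

open MeasureTheory ProbabilityTheory

namespace RenewalAux

variable {Ω : Type*} [MeasureSpace Ω] [IsProbabilityMeasure (ℙ : Measure Ω)]

/-- Partial sums of the shifted sequence: `T Y a m = Y a + ⋯ + Y (a+m-1)`. -/
def T (Y : ℕ → Ω → ℕ) (a m : ℕ) (ω : Ω) : ℕ := ∑ j ∈ Finset.range m, Y (a + j) ω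

/-- Renewal event for the shifted sequence. -/
def H (Y : ℕ → Ω → ℕ) (a d : ℕ) : Set Ω := {ω | ∃ m, T Y a m ω = d}

variable {Y : ℕ → Ω → ℕ}

lemma T_add (a m l : ℕ) (ω : Ω) :
    T Y a (m + l) ω = T Y a m ω + T Y (a + m) l ω := by
  simp only [T, Finset.sum_range_add]
  congr 1
  refine Finset.sum_congr rfl fun j _ => ?_
  rw [add_assoc]

lemma T_strictMono (hpos : ∀ j ω, 0 < Y j ω) (a : ℕ) (ω : Ω) :
    StrictMono (fun m => T Y a m ω) := by
  apply strictMono_nat_of_lt_succ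
  intro m
  have : T Y a (m + 1) ω = T Y a m ω + Y (a + m) ω := by
    simp [T, Finset.sum_range_succ]
  rw [this]
  exact Nat.lt_add_of_pos_right (hpos _ _)

lemma measurable_T (hmeas : ∀ j, Measurable (Y j)) (a m : ℕ) :
    Measurable (T Y a m) :=
  Finset.measurable_sum _ fun j _ => hmeas (a + j)

lemma H_eq_iUnion (a d : ℕ) : H Y a d = ⋃ m, (T Y a m) ⁻¹' {d} := by
  ext ω
  simp [H, Set.mem_iUnion, eq_comm]

lemma measurableSet_H (hmeas : ∀ j, Measurable (Y j)) (a d : ℕ) :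
    MeasurableSet (H Y a d) := by
  rw [H_eq_iUnion]
  exact MeasurableSet.iUnion fun m =>
    (measurable_T hmeas a m) (measurableSet_singleton d)

/-- The σ-algebra generated by `Y j`, `j ≥ a`. -/
def future (Y : ℕ → Ω → ℕ) (a : ℕ) : MeasurableSpace Ω :=
  ⨆ j ∈ {j : ℕ | a ≤ j}, MeasurableSpace.comap (Y j) inferInstance

lemma measurable_Y_future (a j : ℕ) (h : a ≤ j) :
    Measurable[future Y a] (Y j) :=
  Measurable.of_comap_le
    (le_biSup (fun j : ℕ => MeasurableSpace.comap (Y j) inferInstance)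
      (show j ∈ {j : ℕ | a ≤ j} from h))

lemma measurable_T_future (a b m : ℕ) (hab : a ≤ b) :
    Measurable[future Y a] (T Y b m) := by
  exact Finset.measurable_sum (m := future Y a) _
    (fun j _ => measurable_Y_future a (b + j) (le_trans hab (Nat.le_add_right b j)))

lemma measurableSet_H_future (a b d : ℕ) (hab : a ≤ b) :
    MeasurableSet[future Y a] (H Y b d) := by
  rw [H_eq_iUnion]
  exact MeasurableSet.iUnion fun m =>
    measurable_T_future a b m hab (measurableSet_singleton d)

/-- Independence between an event about `T Y a m` (past) and a future event. -/
lemma indep_past_future (hmeas : ∀ j, Measurable (Y j))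
    (hindep : iIndepFun Y ℙ)
    (a m c : ℕ) {B : Set Ω} (hB : MeasurableSet[future Y (a + m)] B) :
    ℙ ((T Y a m) ⁻¹' {c} ∩ B) = ℙ ((T Y a m) ⁻¹' {c}) * ℙ B := by
  set t : Set ℕ := {j | j < a + m} with ht
  have h_le : ∀ j, MeasurableSpace.comap (Y j) inferInstance ≤
      (inferInstance : MeasurableSpace Ω) := fun j => (hmeas j).comap_le
  have hI := indep_biSup_compl h_le hindep.iIndep t
  have htc : tᶜ = {j : ℕ | a + m ≤ j} := by
    ext j; simp [ht, not_lt]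
  rw [htc] at hI
  have hA : MeasurableSet[⨆ j ∈ t, MeasurableSpace.comap (Y j) inferInstance]
      ((T Y a m) ⁻¹' {c}) := by
    have hT : Measurable[⨆ j ∈ t, MeasurableSpace.comap (Y j) inferInstance]
        (T Y a m) := by
      refine Finset.measurable_sum _ (fun j hj => ?_)
      have hj' : a + j ∈ t := by
        have : j < m := Finset.mem_range.mp hj
        simp only [ht, Set.mem_setOf_eq]
        omega
      exact Measurable.of_comap_le
        (le_biSup (fun j : ℕ => MeasurableSpace.comap (Y j) inferInstance) hj')
    exact hT (measurableSet_singleton c)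
  exact (Indep_iff _ _ _).mp hI _ _ hA hB

/-- The law of `T Y a m` does not depend on the shift `a`. -/
lemma meas_T_shift (hmeas : ∀ j, Measurable (Y j))
    (hindep : iIndepFun Y ℙ)
    (hident : ∀ j, IdentDistrib (Y j) (Y 0) ℙ ℙ) :
    ∀ m a d, ℙ ((T Y a m) ⁻¹' {d}) = ℙ ((T Y 0 m) ⁻¹' {d}) := by
  have key : ∀ m a d, ℙ ((T Y a (m + 1)) ⁻¹' {d}) =
      ∑ p ∈ Finset.HasAntidiagonal.antidiagonal d,
        ℙ ((T Y a m) ⁻¹' {p.1}) * ℙ ((Y 0) ⁻¹' {p.2}) := by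
    intro m a d
    have hIF : IndepFun (T Y a m) (Y (a + m)) ℙ := by
      have hinj : Function.Injective (a + ·) := add_right_injective a
      have hnm : a + m ∉ (Finset.range m).image (a + ·) := by
        simp only [Finset.mem_image, Finset.mem_range]
        rintro ⟨j, hj, hje⟩; omega
      have h := hindep.indepFun_finsetSum_of_notMem hmeas hnm
      have heq : (∑ j ∈ (Finset.range m).image (a + ·), Y j) = T Y a m := by
        funext ω
        rw [Finset.sum_apply, Finset.sum_image (fun x _ y _ h => hinj h)]
        rfl
      rwa [heq] at h
    have hset : (T Y a (m + 1)) ⁻¹' {d} =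
        ⋃ p ∈ (Finset.HasAntidiagonal.antidiagonal d : Finset (ℕ × ℕ)),
          ((T Y a m) ⁻¹' {p.1} ∩ (Y (a + m)) ⁻¹' {p.2}) := by
      ext ω
      have hTs : T Y a (m + 1) ω = T Y a m ω + Y (a + m) ω := by
        simp [T, Finset.sum_range_succ]
      simp only [Set.mem_preimage, Set.mem_singleton_iff, Set.mem_iUnion,
        Set.mem_inter_iff, Finset.HasAntidiagonal.mem_antidiagonal, hTs]
      constructor
      · rintro rfl
        exact ⟨(T Y a m ω, Y (a + m) ω), rfl, rfl, rfl⟩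
      · rintro ⟨p, hsum, h1, h2⟩
        rw [h1, h2, hsum]
    rw [hset, measure_biUnion_finset]
    · refine Finset.sum_congr rfl fun p _ => ?_
      rw [hIF.measure_inter_preimage_eq_mul _ _ (measurableSet_singleton _)
        (measurableSet_singleton _)]
      congr 1
      exact (hident (a + m)).measure_mem_eq (measurableSet_singleton _)
    · intro p _ q _ hpq
      refine Set.disjoint_left.mpr fun ω hωp hωq => hpq ?_
      simp only [Set.mem_inter_iff, Set.mem_preimage, Set.mem_singleton_iff] at hωp hωq
      exact Prod.ext (hωp.1 ▸ hωq.1 ▸ rfl) (hωp.2 ▸ hωq.2 ▸ rfl)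
    · intro p _
      exact ((measurable_T hmeas a m) (measurableSet_singleton _)).inter
        ((hmeas (a + m)) (measurableSet_singleton _))
  intro m
  induction m with
  | zero =>
      intro a d
      have h1 : (T Y a 0) ⁻¹' {d} = (T Y 0 0) ⁻¹' {d} := by
        ext ω; simp [T]
      rw [h1]
  | succ m ih =>
      intro a d
      rw [key m a d, key m 0 d]
      exact Finset.sum_congr rfl fun p _ => by rw [ih a p.1]

lemma meas_H_tsum (hmeas : ∀ j, Measurable (Y j)) (hpos : ∀ j ω, 0 < Y j ω)
    (a d : ℕ) (hd : 0 < d) :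
    ℙ (H Y a d) = ∑' m, ℙ ((T Y a m) ⁻¹' {d}) := by
  rw [H_eq_iUnion]
  refine measure_iUnion ?_ fun m => (measurable_T hmeas a m) (measurableSet_singleton d)
  intro m m' hmm'
  refine Set.disjoint_left.mpr fun ω hm hm' => hmm' ?_
  simp only [Set.mem_preimage, Set.mem_singleton_iff] at hm hm'
  exact (T_strictMono hpos a ω).injective (hm.trans hm'.symm)

lemma meas_H_shift (hmeas : ∀ j, Measurable (Y j)) (hpos : ∀ j ω, 0 < Y j ω)
    (hindep : iIndepFun Y ℙ)
    (hident : ∀ j, IdentDistrib (Y j) (Y 0) ℙ ℙ) (a d : ℕ) :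
    ℙ (H Y a d) = ℙ (H Y 0 d) := by
  rcases Nat.eq_zero_or_pos d with rfl | hd
  · have h0 : ∀ b, H Y b 0 = Set.univ := fun b =>
      Set.eq_univ_of_forall fun ω => ⟨0, by simp [T]⟩
    rw [h0, h0]
  · rw [meas_H_tsum hmeas hpos a d hd, meas_H_tsum hmeas hpos 0 d hd]
    exact tsum_congr fun m => meas_T_shift hmeas hindep hident m a d

lemma mono_of_lt_succ {i : ℕ → ℕ} {n : ℕ} (h : ∀ k < n, i k < i (k + 1)) :
    ∀ {k l}, k ≤ l → l ≤ n → i k ≤ i l := by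
  intro k l hkl hln
  induction l with
  | zero => simp_all
  | succ l ih =>
      rcases Nat.eq_or_lt_of_le hkl with rfl | hlt
      · exact le_refl _
      · exact le_trans (ih (by omega) (by omega)) (le_of_lt (h l (by omega)))

/-- Main renewal recursion, proved by induction on `n`, uniformly in the shift `a`. -/
lemma main (hmeas : ∀ j, Measurable (Y j)) (hpos : ∀ j ω, 0 < Y j ω)
    (hindep : iIndepFun Y ℙ)
    (hident : ∀ j, IdentDistrib (Y j) (Y 0) ℙ ℙ) :
    ∀ n a (i : ℕ → ℕ), i 0 = 0 → (∀ k < n, i k < i (k + 1)) →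
      ℙ (⋂ k ∈ Finset.Icc 1 n, H Y a (i k)) =
        ∏ k ∈ Finset.Icc 1 n, ℙ (H Y 0 (i k - i (k - 1))) := by
  intro n
  induction n with
  | zero =>
      intro a i hi0 hmono
      simp
  | succ n ih =>
      intro a i hi0 hmono
      have imono : ∀ {k l}, k ≤ l → l ≤ n + 1 → i k ≤ i l := mono_of_lt_succ hmono
      have hi1pos : 0 < i 1 := by
        have h := hmono 0 (by omega)
        rw [hi0] at h
        simpa using h
      -- the first-passage decomposition
      have hset : (⋂ k ∈ Finset.Icc 1 (n + 1), H Y a (i k)) =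
          ⋃ m, ((T Y a m) ⁻¹' {i 1} ∩
            ⋂ k ∈ Finset.Icc 1 n, H Y (a + m) (i (k + 1) - i 1)) := by
        ext ω
        simp only [Set.mem_iInter, Set.mem_iUnion, Set.mem_inter_iff, Set.mem_preimage,
          Set.mem_singleton_iff, Finset.mem_Icc, H, Set.mem_setOf_eq]
        constructor
        · intro h
          obtain ⟨m, hm⟩ := h 1 ⟨le_refl _, by omega⟩
          refine ⟨m, hm, fun k hk => ?_⟩
          obtain ⟨l', hl'⟩ := h (k + 1) ⟨by omega, by omega⟩
          have h1k : i 1 ≤ i (k + 1) := imono (by omega) (by omega)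
          have hml : m ≤ l' := by
            by_contra hc
            have hlt : T Y a l' ω < T Y a m ω :=
              (T_strictMono hpos a ω) (show l' < m by omega)
            omega
          refine ⟨l' - m, ?_⟩
          have := T_add (Y := Y) a m (l' - m) ω
          rw [show m + (l' - m) = l' by omega] at this
          omega
        · rintro ⟨m, hm, hrest⟩
          intro k hk
          rcases Nat.eq_or_lt_of_le hk.1 with rfl | hk2
          · exact ⟨m, hm⟩
          · obtain ⟨l, hl⟩ := hrest (k - 1) ⟨by omega, by omega⟩
            rw [show k - 1 + 1 = k by omega] at hl
            have h1k : i 1 ≤ i k := imono (by omega) (by omega)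
            refine ⟨m + l, ?_⟩
            rw [T_add (Y := Y) a m l ω, hm]
            omega
      -- measure of each piece
      have hBmeas : ∀ m, MeasurableSet
          (⋂ k ∈ Finset.Icc 1 n, H Y (a + m) (i (k + 1) - i 1)) :=
        fun m => MeasurableSet.biInter (Set.to_countable _)
          fun k _ => measurableSet_H hmeas _ _
      have hpiece : ∀ m, ℙ ((T Y a m) ⁻¹' {i 1} ∩
            ⋂ k ∈ Finset.Icc 1 n, H Y (a + m) (i (k + 1) - i 1)) =
          ℙ ((T Y a m) ⁻¹' {i 1}) *
            ∏ k ∈ Finset.Icc 1 n, ℙ (H Y 0 (i (k + 1) - i k)) := by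
        intro m
        have hBfut : MeasurableSet[future Y (a + m)]
            (⋂ k ∈ Finset.Icc 1 n, H Y (a + m) (i (k + 1) - i 1)) := by
          refine MeasurableSet.biInter (Set.to_countable _) fun k _ => ?_
          exact measurableSet_H_future _ _ _ (le_refl _)
        rw [indep_past_future hmeas hindep a m (i 1) hBfut]
        congr 1
        have hIH := ih (a + m) (fun k => i (k + 1) - i 1) (by simp)
          (fun k hk => by
            show i (k + 1) - i 1 < i (k + 2) - i 1
            have h1 : i (k + 1) < i (k + 2) := hmono (k + 1) (by omega)
            have h2 : i 1 ≤ i (k + 1) := imono (by omega) (by omega)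
            omega)
        rw [hIH]
        refine Finset.prod_congr rfl fun k hk => ?_
        have hk1 : 1 ≤ k := (Finset.mem_Icc.mp hk).1
        have hkn : k ≤ n := (Finset.mem_Icc.mp hk).2
        have harg : (fun k => i (k + 1) - i 1) k - (fun k => i (k + 1) - i 1) (k - 1)
            = i (k + 1) - i k := by
          show i (k + 1) - i 1 - (i (k - 1 + 1) - i 1) = i (k + 1) - i k
          rw [show k - 1 + 1 = k by omega]
          have h1 : i 1 ≤ i k := imono (by omega) (by omega)
          have h2 : i k ≤ i (k + 1) := imono (by omega) (by omega)
          omega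
        rw [harg]
      -- disjointness of the pieces
      have hdisj : Pairwise (Function.onFun Disjoint fun m =>
          (T Y a m) ⁻¹' {i 1} ∩
            ⋂ k ∈ Finset.Icc 1 n, H Y (a + m) (i (k + 1) - i 1)) := by
        intro m m' hmm'
        refine Set.disjoint_left.mpr fun ω hm hm' => hmm' ?_
        have h1 : T Y a m ω = i 1 := hm.1
        have h2 : T Y a m' ω = i 1 := hm'.1
        exact (T_strictMono hpos a ω).injective (h1.trans h2.symm)
      have hpm : ∀ m, MeasurableSet ((T Y a m) ⁻¹' {i 1} ∩
          ⋂ k ∈ Finset.Icc 1 n, H Y (a + m) (i (k + 1) - i 1)) :=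
        fun m => ((measurable_T hmeas a m) (measurableSet_singleton _)).inter (hBmeas m)
      rw [hset, measure_iUnion hdisj hpm]
      calc (∑' m, ℙ ((T Y a m) ⁻¹' {i 1} ∩
            ⋂ k ∈ Finset.Icc 1 n, H Y (a + m) (i (k + 1) - i 1)))
          = ∑' m, ℙ ((T Y a m) ⁻¹' {i 1}) *
              ∏ k ∈ Finset.Icc 1 n, ℙ (H Y 0 (i (k + 1) - i k)) :=
            tsum_congr fun m => hpiece m
        _ = (∑' m, ℙ ((T Y a m) ⁻¹' {i 1})) *
              ∏ k ∈ Finset.Icc 1 n, ℙ (H Y 0 (i (k + 1) - i k)) :=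
            ENNReal.tsum_mul_right
        _ = ℙ (H Y 0 (i 1)) * ∏ k ∈ Finset.Icc 1 n, ℙ (H Y 0 (i (k + 1) - i k)) := by
            rw [← meas_H_tsum hmeas hpos a (i 1) hi1pos,
              meas_H_shift hmeas hpos hindep hident a (i 1)]
        _ = ∏ k ∈ Finset.Icc 1 (n + 1), ℙ (H Y 0 (i k - i (k - 1))) := by
            have hsplit : Finset.Icc 1 (n + 1) = insert 1 (Finset.Icc 2 (n + 1)) := by
              ext k
              simp only [Finset.mem_Icc, Finset.mem_insert]
              omega
            rw [hsplit, Finset.prod_insert (by simp)]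
            congr 1
            · rw [show i 1 - i (1 - 1) = i 1 by rw [show (1:ℕ) - 1 = 0 from rfl, hi0]; omega]
            · have hmap : Finset.Icc 2 (n + 1) =
                  Finset.map ⟨fun k => k + 1, add_left_injective 1⟩ (Finset.Icc 1 n) := by
                ext k
                simp only [Finset.mem_Icc, Finset.mem_map, Function.Embedding.coeFn_mk]
                constructor
                · intro h; exact ⟨k - 1, by omega, by omega⟩
                · rintro ⟨l, hl, rfl⟩; omega
              rw [hmap, Finset.prod_map]
              refine Finset.prod_congr rfl fun k hk => ?_
              simp only [Function.Embedding.coeFn_mk]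
              congr 2

end RenewalAux

/-- **Renewal intersection identity.** For i.i.d. positive-integer random variables
`Y_j`, partial sums `S_m = Y_1 + ⋯ + Y_m`, and renewal events
`E_i = {∃ m, S_m = i}`, for any integers `0 = i_0 < i_1 < ⋯ < i_n` we have
`ℙ(E_{i_1} ∩ ⋯ ∩ E_{i_n}) = ∏_{k=1}^n ℙ(E_{i_k - i_{k-1}})`. -/
theorem renewal_intersection_product
    {Ω : Type*} [MeasureSpace Ω] [IsProbabilityMeasure (ℙ : Measure Ω)]
    (Y : ℕ → Ω → ℕ)
    (hmeas : ∀ j, Measurable (Y j))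
    (hpos : ∀ j ω, 0 < Y j ω)
    (hindep : iIndepFun Y ℙ)
    (hident : ∀ j, IdentDistrib (Y j) (Y 0) ℙ ℙ)
    (S : ℕ → Ω → ℕ) (hS : ∀ m ω, S m ω = ∑ j ∈ Finset.range m, Y j ω)
    (E : ℕ → Set Ω) (hE : ∀ i, E i = {ω | ∃ m, S m ω = i})
    (n : ℕ) (i : ℕ → ℕ) (hi0 : i 0 = 0)
    (hmono : ∀ k < n, i k < i (k + 1)) :
    ℙ (⋂ k ∈ Finset.Icc 1 n, E (i k)) = ∏ k ∈ Finset.Icc 1 n, ℙ (E (i k - i (k - 1))) := by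
  have hEH : ∀ d, E d = RenewalAux.H Y 0 d := by
    intro d
    rw [hE d]
    ext ω
    simp only [Set.mem_setOf_eq, RenewalAux.H, RenewalAux.T]
    constructor
    · rintro ⟨m, hm⟩
      exact ⟨m, by rw [← hm, hS]; exact Finset.sum_congr rfl fun j _ => by rw [zero_add]⟩
    · rintro ⟨m, hm⟩
      exact ⟨m, by rw [← hm, hS]; exact Finset.sum_congr rfl fun j _ => by rw [zero_add]⟩
  simp only [hEH]
  exact RenewalAux.main hmeas hpos hindep hident n 0 i hi0 hmono
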